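/- Let A be a linear operator and B ∈ L(H) a bounded operator on a Hilbert space H with 0 ∉ closure(W(B)). Let Ω ⊆ ℂ \ W(A,B) be a connected set with Ω ∩ ρ(A,B) ≠ ∅. Then Ω ⊆ ρ(A,B) and for all λ ∈ Ω, ‖(A − λB)⁻¹‖ ≤ 1 / ( dist(0, W(B)) · dist(λ, W(A,B)) ). -/

import Mathlib

open Filter Topology

variable {H : Type*} [NormedAddCommGroup H] [InnerProductSpace ℂ H] [CompleteSpace H]

/-- The numerical range of (the restriction to the domain `d` of) a linear operator `T`. -/
def numRange (T : H →ₗ[ℂ] H) (d : Submodule ℂ H) : Set ℂ :=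
  {z | ∃ x ∈ d, ‖x‖ = 1 ∧ z = (inner ℂ (T x) x : ℂ)}

/-- The pencil numerical range `W(A,B) = {λ : 0 ∈ closure (W(A - λB))}`. -/
def pencilW (A B : H →ₗ[ℂ] H) (dA : Submodule ℂ H) : Set ℂ :=
  {lam : ℂ | (0 : ℂ) ∈ closure (numRange (A - lam • B) dA)}

/-- The pencil numerical range `w(A,B) = {⟨Ax,x⟩/⟨Bx,x⟩ : x ∈ dom A, ⟨Bx,x⟩ ≠ 0}`. -/
def pencilw (A B : H →ₗ[ℂ] H) (dA : Submodule ℂ H) : Set ℂ :=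
  {lam : ℂ | ∃ x ∈ dA, (inner ℂ (B x) x : ℂ) ≠ 0 ∧
    lam = (inner ℂ (A x) x : ℂ) / (inner ℂ (B x) x : ℂ)}

/-- The essential numerical range of an operator `T` with domain `d`, via weakly null
normalized sequences. -/
def essNumRange (T : H →ₗ[ℂ] H) (d : Submodule ℂ H) : Set ℂ :=
  {z | ∃ x : ℕ → H, (∀ n, x n ∈ d) ∧ (∀ n, ‖x n‖ = 1) ∧
    (∀ y : H, Tendsto (fun n => (inner ℂ y (x n) : ℂ)) atTop (𝓝 0)) ∧
    Tendsto (fun n => (inner ℂ (T (x n)) (x n) : ℂ)) atTop (𝓝 z)}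

/-- The pencil essential numerical range `W_e(A,B) = {λ : 0 ∈ W_e(A - λB)}`. -/
def pencilWe (A B : H →ₗ[ℂ] H) (dA : Submodule ℂ H) : Set ℂ :=
  {lam : ℂ | (0 : ℂ) ∈ essNumRange (A - lam • B) dA}

/-- The pencil essential numerical range `w_e(A,B)`. -/
def pencilwe (A B : H →ₗ[ℂ] H) (dA : Submodule ℂ H) : Set ℂ :=
  {lam : ℂ | ∃ x : ℕ → H, (∀ n, x n ∈ dA) ∧ (∀ n, ‖x n‖ = 1) ∧
    (∀ y : H, Tendsto (fun n => (inner ℂ y (x n) : ℂ)) atTop (𝓝 0)) ∧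
    (∀ n, (inner ℂ (B (x n)) (x n) : ℂ) ≠ 0) ∧
    Tendsto (fun n => (inner ℂ (A (x n)) (x n) : ℂ) / (inner ℂ (B (x n)) (x n) : ℂ))
      atTop (𝓝 lam)}

/-- The numerical range of a bounded operator `B`. -/
def numRangeCLM (B : H →L[ℂ] H) : Set ℂ := {z | ∃ x : H, ‖x‖ = 1 ∧ z = (inner ℂ (B x) x : ℂ)}

/-- The resolvent set of the pencil `λ ↦ A - λB`: those `λ` for which `A - λB` has a bounded
everywhere-defined inverse. -/
def pencilRes (A : H →ₗ[ℂ] H) (B : H →L[ℂ] H) (dA : Submodule ℂ H) : Set ℂ :=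
  {lam : ℂ | ∃ R : H →L[ℂ] H, (∀ y, R y ∈ dA) ∧ (∀ y, A (R y) - lam • B (R y) = y) ∧
    (∀ x ∈ dA, R (A x - lam • B x) = x)}

set_option linter.unusedSectionVars false
set_option linter.unnecessarySimpa false
section Aux

variable {H : Type*} [NormedAddCommGroup H] [InnerProductSpace ℂ H] [CompleteSpace H]
variable (A : H →ₗ[ℂ] H) (dA : Submodule ℂ H) (B : H →L[ℂ] H)

lemma apply_sub_smul (lam : ℂ) (x : H) :
    (A - lam • (B : H →ₗ[ℂ] H)) x = A x - lam • B x := by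
  simp

/-- A unit vector in the domain with nonvanishing `⟨Bx,x⟩` produces a point of `pencilW`. -/
lemma unit_mem_pencilW {x : H} (hx : x ∈ dA) (hx1 : ‖x‖ = 1)
    (hb : (inner ℂ (B x) x : ℂ) ≠ 0) :
    (starRingEnd ℂ) ((inner ℂ (A x) x : ℂ) / (inner ℂ (B x) x : ℂ))
      ∈ pencilW A (B : H →ₗ[ℂ] H) dA := by
  set μ := (starRingEnd ℂ) ((inner ℂ (A x) x : ℂ) / (inner ℂ (B x) x : ℂ)) with hμ
  have h0 : (0 : ℂ) ∈ numRange (A - μ • (B : H →ₗ[ℂ] H)) dA := by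
    refine ⟨x, hx, hx1, ?_⟩
    rw [apply_sub_smul, inner_sub_left, inner_smul_left]
    have : (starRingEnd ℂ) μ = (inner ℂ (A x) x : ℂ) / (inner ℂ (B x) x : ℂ) := by
      rw [hμ, RingHomCompTriple.comp_apply]; simp
    rw [this, div_mul_cancel₀ _ hb, sub_self]
  exact subset_closure h0

/-- The main pointwise lower bound. -/
lemma pencil_lower_bound (hβ : 0 < Metric.infDist 0 (numRangeCLM B)) (lam : ℂ)
    {x : H} (hx : x ∈ dA) :
    Metric.infDist 0 (numRangeCLM B) *
      Metric.infDist lam (pencilW A (B : H →ₗ[ℂ] H) dA) * ‖x‖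
      ≤ ‖A x - lam • B x‖ := by
  set β := Metric.infDist 0 (numRangeCLM B)
  set δ := Metric.infDist lam (pencilW A (B : H →ₗ[ℂ] H) dA) with hδdef
  rcases eq_or_ne x 0 with rfl | hx0
  · simp
  · have hxn : (0:ℝ) < ‖x‖ := norm_pos_iff.mpr hx0
    set c : ℂ := (‖x‖ : ℂ)⁻¹ with hc
    set u : H := c • x with hu
    have hcn : ‖c‖ = ‖x‖⁻¹ := by
      rw [hc, norm_inv, Complex.norm_real, Real.norm_eq_abs, abs_of_pos hxn]
    have hu1 : ‖u‖ = 1 := by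
      rw [hu, norm_smul, hcn, inv_mul_cancel₀ (ne_of_gt hxn)]
    have hud : u ∈ dA := dA.smul_mem c hx
    set b : ℂ := (inner ℂ (B u) u : ℂ) with hb
    have hbW : b ∈ numRangeCLM B := ⟨u, hu1, rfl⟩
    have hβb : β ≤ ‖b‖ := by
      have := Metric.infDist_le_dist_of_mem (x := (0:ℂ)) hbW
      rwa [dist_zero_left] at this
    have hbne : b ≠ 0 := by
      intro h; rw [h, norm_zero] at hβb; linarith
    set μ := (starRingEnd ℂ) ((inner ℂ (A u) u : ℂ) / b) with hμ
    have hμW : μ ∈ pencilW A (B : H →ₗ[ℂ] H) dA := unit_mem_pencilW A dA B hud hu1 hbne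
    have hδμ : δ ≤ ‖lam - μ‖ := by
      have := Metric.infDist_le_dist_of_mem (x := lam) hμW
      rwa [dist_eq_norm] at this
    -- the inner product of (A - lam B) at u
    have hkey : (inner ℂ (A u - lam • B u) u : ℂ) = ((starRingEnd ℂ) μ - (starRingEnd ℂ) lam) * b := by
      rw [inner_sub_left, inner_smul_left, ← hb]
      have : (starRingEnd ℂ) μ * b = (inner ℂ (A u) u : ℂ) := by
        rw [hμ, RingHomCompTriple.comp_apply]
        simp only [RingHom.id_apply]
        rw [div_mul_cancel₀ _ hbne]
      rw [sub_mul, this]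
    have hnorm1 : β * δ ≤ ‖(inner ℂ (A u - lam • B u) u : ℂ)‖ := by
      rw [hkey, norm_mul]
      have h1 : ‖(starRingEnd ℂ) μ - (starRingEnd ℂ) lam‖ = ‖lam - μ‖ := by
        rw [← map_sub, RCLike.norm_conj, norm_sub_rev]
      rw [h1, mul_comm ‖lam - μ‖ ‖b‖]
      exact mul_le_mul hβb hδμ (Metric.infDist_nonneg) (norm_nonneg _)
    have hnorm2 : ‖(inner ℂ (A u - lam • B u) u : ℂ)‖ ≤ ‖A u - lam • B u‖ := by
      have := norm_inner_le_norm (𝕜 := ℂ) (A u - lam • B u) u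
      rwa [hu1, mul_one] at this
    have hscale : ‖A u - lam • B u‖ = ‖x‖⁻¹ * ‖A x - lam • B x‖ := by
      have : A u - lam • B u = c • (A x - lam • B x) := by
        rw [hu]
        simp only [map_smul, smul_sub]
        rw [smul_comm lam c]
      rw [this, norm_smul, hcn]
    have : β * δ ≤ ‖x‖⁻¹ * ‖A x - lam • B x‖ := by
      rw [← hscale]; exact le_trans hnorm1 hnorm2
    calc β * δ * ‖x‖ ≤ (‖x‖⁻¹ * ‖A x - lam • B x‖) * ‖x‖ :=
          mul_le_mul_of_nonneg_right this (norm_nonneg _)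
      _ = ‖A x - lam • B x‖ := by field_simp

/-- `pencilW` is closed. -/
lemma pencilW_isClosed : IsClosed (pencilW A (B : H →ₗ[ℂ] H) dA) := by
  rw [← isOpen_compl_iff]
  rw [Metric.isOpen_iff]
  intro lam hlam
  have h0 : (0:ℂ) ∉ closure (numRange (A - lam • (B : H →ₗ[ℂ] H)) dA) := hlam
  rw [Metric.mem_closure_iff] at h0
  push_neg at h0
  obtain ⟨ε, hε, hsep⟩ := h0
  refine ⟨ε / (2 * (‖B‖ + 1)), by positivity, ?_⟩
  intro lam' hlam'
  rw [Metric.mem_ball, Complex.dist_eq] at hlam'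
  intro hmem
  have hsub : closure (numRange (A - lam' • (B : H →ₗ[ℂ] H)) dA) ⊆ {z : ℂ | ε/2 ≤ ‖z‖} := by
    apply closure_minimal
    · rintro z' ⟨x, hx, hx1, rfl⟩
      have hzS : (inner ℂ (A x - lam • B x) x : ℂ) ∈ numRange (A - lam • (B : H →ₗ[ℂ] H)) dA :=
        ⟨x, hx, hx1, by rw [apply_sub_smul]⟩
      have hz : ε ≤ ‖(inner ℂ (A x - lam • B x) x : ℂ)‖ := by
        have := hsep _ hzS
        rwa [dist_zero_left] at this
      have hbx : ‖(inner ℂ (B x) x : ℂ)‖ ≤ ‖B‖ := by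
        calc ‖(inner ℂ (B x) x : ℂ)‖ ≤ ‖B x‖ * ‖x‖ := norm_inner_le_norm _ _
          _ ≤ (‖B‖ * ‖x‖) * ‖x‖ := by
              exact mul_le_mul_of_nonneg_right (B.le_opNorm x) (norm_nonneg _)
          _ = ‖B‖ := by rw [hx1]; ring
      have hdiff : (inner ℂ ((A - lam' • (B : H →ₗ[ℂ] H)) x) x : ℂ)
          = (inner ℂ (A x - lam • B x) x : ℂ)
            + ((starRingEnd ℂ) lam - (starRingEnd ℂ) lam') * (inner ℂ (B x) x : ℂ) := by
        rw [apply_sub_smul]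
        rw [inner_sub_left, inner_sub_left, inner_smul_left, inner_smul_left]
        ring
      rw [Set.mem_setOf_eq, hdiff]
      have hpert : ‖((starRingEnd ℂ) lam - (starRingEnd ℂ) lam') * (inner ℂ (B x) x : ℂ)‖ ≤ ε/2 := by
        rw [norm_mul, ← map_sub, RCLike.norm_conj]
        have h1 : ‖lam - lam'‖ ≤ ε / (2 * (‖B‖ + 1)) := by
          rw [norm_sub_rev]
          · calc ‖lam' - lam‖ = ‖lam' - lam‖ := rfl
              _ ≤ ε / (2 * (‖B‖ + 1)) := le_of_lt hlam'
        calc ‖lam - lam'‖ * ‖(inner ℂ (B x) x : ℂ)‖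
            ≤ (ε / (2 * (‖B‖ + 1))) * ‖B‖ := by
              apply mul_le_mul h1 hbx (norm_nonneg _) (by positivity)
          _ ≤ ε/2 := by
              rw [div_mul_eq_mul_div, div_le_div_iff₀ (by positivity) (by norm_num)]
              nlinarith [norm_nonneg B]
      calc ε/2 = ε - ε/2 := by ring
        _ ≤ ‖(inner ℂ (A x - lam • B x) x : ℂ)‖
            - ‖((starRingEnd ℂ) lam - (starRingEnd ℂ) lam') * (inner ℂ (B x) x : ℂ)‖ := by
            linarith
        _ ≤ ‖(inner ℂ (A x - lam • B x) x : ℂ)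
            + ((starRingEnd ℂ) lam - (starRingEnd ℂ) lam') * (inner ℂ (B x) x : ℂ)‖ := by
            have h2 := norm_sub_le ((inner ℂ (A x - lam • B x) x : ℂ)
              + ((starRingEnd ℂ) lam - (starRingEnd ℂ) lam') * (inner ℂ (B x) x : ℂ))
              (((starRingEnd ℂ) lam - (starRingEnd ℂ) lam') * (inner ℂ (B x) x : ℂ))
            rw [add_sub_cancel_right] at h2
            linarith
    · have : {z : ℂ | ε/2 ≤ ‖z‖} = {z : ℂ | (fun _ => ε/2) z ≤ ‖z‖} := rfl
      exact isClosed_le continuous_const continuous_norm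
  have := hsub hmem
  rw [Set.mem_setOf_eq, norm_zero] at this
  linarith

/-- Bounded invertibility plus lower bound gives the resolvent norm estimate. -/
lemma res_norm_le {lam : ℂ} {c : ℝ} (hc : 0 < c)
    (hlow : ∀ x ∈ dA, c * ‖x‖ ≤ ‖A x - lam • B x‖)
    {R : H →L[ℂ] H} (hR1 : ∀ y, R y ∈ dA) (hR2 : ∀ y, A (R y) - lam • B (R y) = y) :
    ‖R‖ ≤ 1 / c := by
  apply ContinuousLinearMap.opNorm_le_bound _ (by positivity)
  intro y
  have := hlow (R y) (hR1 y)
  rw [hR2 y] at this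
  rw [div_mul_eq_mul_div, le_div_iff₀ hc]
  linarith

/-- Neumann-series perturbation of a pencil resolvent point. -/
lemma pencil_perturb {lam mu : ℂ} {R : H →L[ℂ] H}
    (hR1 : ∀ y, R y ∈ dA) (hR2 : ∀ y, A (R y) - lam • B (R y) = y)
    (hR3 : ∀ x ∈ dA, R (A x - lam • B x) = x)
    (hsmall : ‖B‖ * ‖R‖ * ‖mu - lam‖ < 1) :
    mu ∈ pencilRes A B dA := by
  set T : H →L[ℂ] H := (mu - lam) • (B.comp R) with hT
  have hTnorm : ‖T‖ < 1 := by
    calc ‖T‖ = ‖mu - lam‖ * ‖B.comp R‖ := by rw [hT, norm_smul]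
      _ ≤ ‖mu - lam‖ * (‖B‖ * ‖R‖) :=
          mul_le_mul_of_nonneg_left (ContinuousLinearMap.opNorm_comp_le _ _) (norm_nonneg _)
      _ = ‖B‖ * ‖R‖ * ‖mu - lam‖ := by ring
      _ < 1 := hsmall
  set U : (H →L[ℂ] H)ˣ := Units.oneSub T hTnorm with hU
  have hUval : (U : H →L[ℂ] H) = 1 - T := rfl
  have hUinvU : ∀ w : H, (↑U⁻¹ : H →L[ℂ] H) ((U : H →L[ℂ] H) w) = w := by
    intro w
    calc (↑U⁻¹ : H →L[ℂ] H) ((U : H →L[ℂ] H) w)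
        = ((↑U⁻¹ : H →L[ℂ] H) * (U : H →L[ℂ] H)) w := rfl
      _ = (1 : H →L[ℂ] H) w := by rw [U.inv_mul]
      _ = w := rfl
  have hUUinv : ∀ w : H, (U : H →L[ℂ] H) ((↑U⁻¹ : H →L[ℂ] H) w) = w := by
    intro w
    calc (U : H →L[ℂ] H) ((↑U⁻¹ : H →L[ℂ] H) w)
        = ((U : H →L[ℂ] H) * (↑U⁻¹ : H →L[ℂ] H)) w := rfl
      _ = (1 : H →L[ℂ] H) w := by rw [U.mul_inv]
      _ = w := rfl
  have hUapp : ∀ w : H, (U : H →L[ℂ] H) w = w - (mu - lam) • B (R w) := by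
    intro w; rw [hUval]; simp [hT]
  refine ⟨R.comp (↑U⁻¹ : H →L[ℂ] H), ?_, ?_, ?_⟩
  · intro y; exact hR1 _
  · intro y
    set z := (↑U⁻¹ : H →L[ℂ] H) y with hz
    have hzy : z - (mu - lam) • B (R z) = y := by
      rw [← hUapp z, hz, hUUinv]
    simp only [ContinuousLinearMap.coe_comp', Function.comp_apply, ← hz]
    calc A (R z) - mu • B (R z)
        = (A (R z) - lam • B (R z)) - (mu - lam) • B (R z) := by
          rw [sub_smul]; abel
      _ = z - (mu - lam) • B (R z) := by rw [hR2 z]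
      _ = y := hzy
  · intro x hx
    have hkey : A x - mu • B x = (U : H →L[ℂ] H) (A x - lam • B x) := by
      rw [hUapp, hR3 x hx, sub_smul]; abel
    simp only [ContinuousLinearMap.coe_comp', Function.comp_apply]
    rw [hkey, hUinvU, hR3 x hx]

end Aux
section Aux2
variable {H : Type*} [NormedAddCommGroup H] [InnerProductSpace ℂ H] [CompleteSpace H]
variable (A : H →ₗ[ℂ] H) (dA : Submodule ℂ H) (B : H →L[ℂ] H)

lemma norm_inv_smul_unit {x : H} (hx : x ≠ 0) : ‖((‖x‖ : ℂ))⁻¹ • x‖ = 1 := by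
  have hxn : (0:ℝ) < ‖x‖ := norm_pos_iff.mpr hx
  rw [norm_smul, norm_inv, Complex.norm_real, Real.norm_eq_abs, abs_of_pos hxn,
    inv_mul_cancel₀ (ne_of_gt hxn)]

lemma inner_B_ne_zero (hβ : 0 < Metric.infDist 0 (numRangeCLM B)) {u : H} (hu1 : ‖u‖ = 1) :
    (inner ℂ (B u) u : ℂ) ≠ 0 := by
  intro h
  have hmem : (0:ℂ) ∈ numRangeCLM B := ⟨u, hu1, h.symm⟩
  have := Metric.infDist_le_dist_of_mem (x := (0:ℂ)) hmem
  rw [dist_self] at this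
  linarith

end Aux2
/-- If `B` is bounded with `0 ∉ closure W(B)`, `Ω ⊆ ℂ \ W(A,B)` is connected with
`Ω ∩ ρ(A,B) ≠ ∅`, then `Ω ⊆ ρ(A,B)` and the resolvent norm bound
`‖(A - λB)⁻¹‖ ≤ 1/(dist(0,W(B)) dist(λ, W(A,B)))` holds on `Ω`. -/
theorem stmt_6 (A : H →ₗ[ℂ] H) (dA : Submodule ℂ H)
    (hAclosed : IsClosed {p : H × H | p.1 ∈ dA ∧ p.2 = A p.1})
    (B : H →L[ℂ] H) (hB : (0 : ℂ) ∉ closure (numRangeCLM B))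
    (Ω : Set ℂ) (hΩconn : IsPreconnected Ω)
    (hΩ : ∀ lam ∈ Ω, lam ∉ pencilW A (B : H →ₗ[ℂ] H) dA)
    (hρ : (Ω ∩ pencilRes A B dA).Nonempty) :
    Ω ⊆ pencilRes A B dA ∧
    ∀ lam ∈ Ω, ∀ R : H →L[ℂ] H,
      ((∀ y, R y ∈ dA) ∧ (∀ y, A (R y) - lam • B (R y) = y) ∧
        (∀ x ∈ dA, R (A x - lam • B x) = x)) →
      ‖R‖ ≤ 1 / (Metric.infDist 0 (numRangeCLM B) *
        Metric.infDist lam (pencilW A (B : H →ₗ[ℂ] H) dA)) := by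

  rcases subsingleton_or_nontrivial H with hs | hnt
  · constructor
    · intro lam _
      exact ⟨0, fun y => by simpa using dA.zero_mem,
        fun y => Subsingleton.elim _ _, fun x _ => Subsingleton.elim _ _⟩
    · intro lam _ R _
      have hR0 : R = 0 := by ext y; exact Subsingleton.elim _ _
      rw [hR0, norm_zero]
      exact one_div_nonneg.mpr (mul_nonneg Metric.infDist_nonneg Metric.infDist_nonneg)
  · set β := Metric.infDist 0 (numRangeCLM B) with hβdef
    set W := pencilW A (B : H →ₗ[ℂ] H) dA with hWdef
    obtain ⟨x0, hx0⟩ := exists_ne (0 : H)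
    set u0 : H := ((‖x0‖ : ℂ))⁻¹ • x0 with hu0
    have hu01 : ‖u0‖ = 1 := norm_inv_smul_unit hx0
    have hWBne : (numRangeCLM B).Nonempty := ⟨_, u0, hu01, rfl⟩
    have hβpos : 0 < β := by
      have hne : β ≠ 0 := fun h => hB ((Metric.mem_closure_iff_infDist_zero hWBne).mpr h)
      exact lt_of_le_of_ne Metric.infDist_nonneg (Ne.symm hne)
    have hBne : B ≠ 0 := by
      intro h
      apply hB
      apply subset_closure
      exact ⟨u0, hu01, by rw [h]; simp⟩
    have hBnorm : 0 < ‖B‖ := norm_pos_iff.mpr hBne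
    obtain ⟨lam₀, hlam₀Ω, R₀, hR₀1, hR₀2, hR₀3⟩ := hρ
    have hWne : W.Nonempty := by
      set x1 := R₀ x0 with hx1
      have hx1d : x1 ∈ dA := hR₀1 x0
      have hx1ne : x1 ≠ 0 := by
        intro h
        have h2 := hR₀2 x0
        rw [← hx1, h] at h2
        simp only [map_zero, smul_zero, sub_zero] at h2
        exact hx0 h2.symm
      set u : H := ((‖x1‖ : ℂ))⁻¹ • x1 with hu
      have hu1 : ‖u‖ = 1 := norm_inv_smul_unit hx1ne
      have hud : u ∈ dA := dA.smul_mem _ hx1d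
      exact ⟨_, unit_mem_pencilW A dA B hud hu1 (inner_B_ne_zero B hβpos hu1)⟩
    have hδpos : ∀ lam ∈ Ω, 0 < Metric.infDist lam W := by
      intro lam hlam
      have hne : Metric.infDist lam W ≠ 0 := by
        intro h
        have hcl : lam ∈ closure W := (Metric.mem_closure_iff_infDist_zero hWne).mpr h
        rw [(pencilW_isClosed A dA B).closure_eq] at hcl
        exact hΩ lam hlam hcl
      exact lt_of_le_of_ne Metric.infDist_nonneg (Ne.symm hne)
    have hbound : ∀ lam ∈ Ω, ∀ R : H →L[ℂ] H,
        ((∀ y, R y ∈ dA) ∧ (∀ y, A (R y) - lam • B (R y) = y) ∧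
          (∀ x ∈ dA, R (A x - lam • B x) = x)) →
        ‖R‖ ≤ 1 / (β * Metric.infDist lam W) := by
      rintro lam hlam R ⟨h1, h2, _⟩
      exact res_norm_le A dA B (mul_pos hβpos (hδpos lam hlam))
        (fun x hx => pencil_lower_bound A dA B hβpos lam hx) h1 h2
    have hu_open : IsOpen (pencilRes A B dA) := by
      rw [Metric.isOpen_iff]
      rintro lam ⟨R, h1, h2, h3⟩
      refine ⟨1 / (‖B‖ * ‖R‖ + 1), by positivity, ?_⟩
      intro mu hmu
      rw [Metric.mem_ball, dist_eq_norm] at hmu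
      apply pencil_perturb A dA B h1 h2 h3
      have hRn : (0:ℝ) ≤ ‖B‖ * ‖R‖ := by positivity
      calc ‖B‖ * ‖R‖ * ‖mu - lam‖ ≤ (‖B‖ * ‖R‖) * (1 / (‖B‖ * ‖R‖ + 1)) :=
            mul_le_mul_of_nonneg_left (le_of_lt hmu) hRn
        _ < 1 := by
            rw [mul_one_div, div_lt_one (by positivity)]
            linarith
    have hsub : Ω ⊆ pencilRes A B dA := by
      set v : Set ℂ := interior (pencilRes A B dA)ᶜ with hv
      have hv_open : IsOpen v := isOpen_interior
      have hcover : Ω ⊆ pencilRes A B dA ∪ v := by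
        intro lam hlam
        by_cases h : lam ∈ v
        · exact Or.inr h
        · left
          set δ := Metric.infDist lam W with hδ
          have hδl : 0 < δ := hδpos lam hlam
          set r : ℝ := min (δ/2) (β * δ / (2 * ‖B‖)) with hr
          have hrpos : 0 < r :=
            lt_min (by linarith) (div_pos (mul_pos hβpos hδl) (by linarith))
          have hmeet : ∃ mu, mu ∈ Metric.ball lam r ∧ mu ∈ pencilRes A B dA := by
            by_contra hcon
            push_neg at hcon
            apply h
            have hball : Metric.ball lam r ⊆ (pencilRes A B dA)ᶜ :=
              fun z hz => hcon z hz
            exact interior_maximal hball Metric.isOpen_ball (Metric.mem_ball_self hrpos)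
          obtain ⟨mu, hmu_ball, Rm, h1, h2, h3⟩ := hmeet
          have hdist : dist mu lam < r := Metric.mem_ball.mp hmu_ball
          set d := Metric.infDist mu W with hd
          have hLip : δ ≤ d + dist lam mu := Metric.infDist_le_infDist_add_dist
          have hdlm : dist lam mu < δ / 2 := by
            rw [dist_comm]
            exact lt_of_lt_of_le hdist (min_le_left _ _)
          have hδμ : δ / 2 ≤ d := by linarith
          have hdpos : 0 < d := by linarith
          have hRm : ‖Rm‖ ≤ 1 / (β * d) :=
            res_norm_le A dA B (mul_pos hβpos hdpos)
              (fun x hx => pencil_lower_bound A dA B hβpos mu hx) h1 h2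
          apply pencil_perturb A dA B h1 h2 h3
          have h5 : ‖lam - mu‖ < β * δ / (2 * ‖B‖) := by
            calc ‖lam - mu‖ = dist mu lam := by rw [dist_comm, dist_eq_norm]
              _ < r := hdist
              _ ≤ _ := min_le_right _ _
          have h6 : ‖B‖ * ‖Rm‖ * ‖lam - mu‖ ≤ ‖B‖ * (1 / (β * d)) * ‖lam - mu‖ :=
            mul_le_mul_of_nonneg_right
              (mul_le_mul_of_nonneg_left hRm (norm_nonneg _)) (norm_nonneg _)
          have h7 : ‖B‖ * (1 / (β * d)) * ‖lam - mu‖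
              < ‖B‖ * (1 / (β * d)) * (β * δ / (2 * ‖B‖)) := by
            apply mul_lt_mul_of_pos_left h5 (by positivity)
          have h8 : ‖B‖ * (1 / (β * d)) * (β * δ / (2 * ‖B‖)) ≤ 1 := by
            have heq : ‖B‖ * (1 / (β * d)) * (β * δ / (2 * ‖B‖)) = δ / (2 * d) := by
              field_simp
            rw [heq, div_le_one (by linarith)]
            linarith
          linarith
      have hdisjoint : pencilRes A B dA ∩ v = ∅ := by
        ext z
        simp only [Set.mem_inter_iff, Set.mem_empty_iff_false, iff_false, not_and]
        intro hzu hzv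
        exact (interior_subset hzv) hzu
      intro lam hlam
      rcases hcover hlam with h | h
      · exact h
      · exfalso
        obtain ⟨z, _, hz2⟩ := hΩconn (pencilRes A B dA) v hu_open hv_open hcover
          ⟨lam₀, hlam₀Ω, ⟨R₀, hR₀1, hR₀2, hR₀3⟩⟩ ⟨lam, hlam, h⟩
        rw [hdisjoint] at hz2
        exact hz2
    exact ⟨hsub, hbound⟩
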